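/- The sets L_i R_{n-i}, for i = 1, ..., n-1, are pairwise disjoint; consequently, |⋃_{i=1}^{n-1} L_i R_{n-i}| = Σ_{i=1}^{n-1} |L_i| · |R_{n-i}|. -/

import Mathlib

/-- Concatenation of sets of strings: `AB = {ab : a ∈ A, b ∈ B}`. -/
def catSet {α : Type*} (A B : Set (List α)) : Set (List α) :=
  {w | ∃ a ∈ A, ∃ b ∈ B, w = a ++ b}

/-- The partition system of Construction `M_{q,n}`: `(L 1, R 1)` is a partition of the
one-letter words into two nonempty parts, and for `2 ≤ i ≤ n-1`, `(L i, R i)` is a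
partition of `⋃_{j=1}^{i-1} (L j)(R (i-j))`. -/
def PartitionSystem {α : Type*} (n : ℕ) (L R : ℕ → Set (List α)) : Prop :=
  (L 1 ∪ R 1 = {w : List α | w.length = 1}) ∧ (L 1 ∩ R 1 = ∅) ∧
  (L 1).Nonempty ∧ (R 1).Nonempty ∧
  ∀ i, 2 ≤ i → i ≤ n - 1 →
    (L i ∪ R i = ⋃ j ∈ Finset.Ico 1 i, catSet (L j) (R (i - j))) ∧ (L i ∩ R i = ∅)

namespace Stmt11Aux

variable {α : Type*}

/-- Concatenations of one or more `R`-blocks with indices in `[1, n-1]`. -/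
inductive RProd (R : ℕ → Set (List α)) (n : ℕ) : List α → Prop
  | single {p : ℕ} {y : List α} (h1 : 1 ≤ p) (h2 : p ≤ n - 1) (hy : y ∈ R p) : RProd R n y
  | cons {p : ℕ} {y v : List α} (h1 : 1 ≤ p) (h2 : p ≤ n - 1) (hy : y ∈ R p)
      (hv : RProd R n v) : RProd R n (y ++ v)

lemma RProd.head {R : ℕ → Set (List α)} {n : ℕ} {w : List α} (h : RProd R n w) :
    ∃ p y rest, 1 ≤ p ∧ p ≤ n - 1 ∧ y ∈ R p ∧ w = y ++ rest := by
  cases h with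
  | single h1 h2 hy => exact ⟨_, _, [], h1, h2, hy, by simp⟩
  | cons h1 h2 hy hv => exact ⟨_, _, _, h1, h2, hy, rfl⟩

lemma RProd.append_right {R : ℕ → Set (List α)} {n : ℕ} {w v : List α}
    (h : RProd R n w) (hv : RProd R n v) : RProd R n (w ++ v) := by
  induction h with
  | single h1 h2 hy => exact .cons h1 h2 hy hv
  | cons h1 h2 hy _ ih => rw [List.append_assoc]; exact .cons h1 h2 hy ih

lemma append_eq_of_lt {z u x y : List α} (h : z ++ u = x ++ y) (hlt : z.length < x.length) :
    ∃ e, e ≠ [] ∧ x = z ++ e ∧ u = e ++ y := by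
  have htake : x.take z.length = z := by
    have h1 : (z ++ u).take z.length = z := List.take_left
    have h2 : (x ++ y).take z.length = x.take z.length :=
      List.take_append_of_le_length (le_of_lt hlt)
    rw [h, h2] at h1; exact h1
  refine ⟨x.drop z.length, ?_, ?_, ?_⟩
  · intro hnil
    have := congrArg List.length hnil
    simp at this
    omega
  · conv_lhs => rw [← List.take_append_drop z.length x]
    rw [htake]
  · have hx : x = z ++ x.drop z.length := by
      conv_lhs => rw [← List.take_append_drop z.length x]
      rw [htake]
    have : z ++ u = z ++ (x.drop z.length ++ y) := by
      rw [h, ← List.append_assoc, ← hx]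
    exact List.append_cancel_left this

variable {n : ℕ} {L R : ℕ → Set (List α)}

lemma psplit (hp : PartitionSystem n L R) {k : ℕ} (h2 : 2 ≤ k) (hk : k ≤ n - 1)
    {w : List α} (hw : w ∈ L k ∪ R k) :
    ∃ j, 1 ≤ j ∧ j < k ∧ ∃ x ∈ L j, ∃ y ∈ R (k - j), w = x ++ y := by
  have heq := (hp.2.2.2.2 k h2 hk).1
  rw [heq] at hw
  simp only [Set.mem_iUnion, Finset.mem_Ico, catSet, Set.mem_setOf_eq] at hw
  obtain ⟨j, ⟨hj1, hjk⟩, a, ha, b, hb, hw⟩ := hw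
  exact ⟨j, hj1, hjk, a, ha, b, hb, hw⟩

lemma pdisj (hp : PartitionSystem n L R) {k : ℕ} (h1 : 1 ≤ k) (hk : k ≤ n - 1)
    {w : List α} (hwL : w ∈ L k) (hwR : w ∈ R k) : False := by
  rcases eq_or_lt_of_le h1 with h | h
  · have := hp.2.1
    rw [← h] at hwL hwR
    exact absurd (this ▸ Set.mem_inter hwL hwR) (Set.notMem_empty w)
  · exact absurd ((hp.2.2.2.2 k h hk).2 ▸ Set.mem_inter hwL hwR) (Set.notMem_empty w)

lemma plen (hp : PartitionSystem n L R) :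
    ∀ k, 1 ≤ k → k ≤ n - 1 → ∀ w, w ∈ L k ∪ R k → w.length = k := by
  intro k
  induction k using Nat.strong_induction_on with
  | _ k ih =>
    intro h1 hk w hw
    rcases eq_or_lt_of_le h1 with h | h
    · rw [← h] at hw ⊢
      rw [hp.1] at hw
      exact hw
    · obtain ⟨j, hj1, hjk, x, hx, y, hy, rfl⟩ := psplit hp h hk hw
      have hxl := ih j hjk hj1 (by omega) x (Or.inl hx)
      have hyl := ih (k - j) (by omega) (by omega) (by omega) y (Or.inr hy)
      rw [List.length_append, hxl, hyl]
      omega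

/-- The key structural lemma, by strong induction on the length of `h`.
(P): a word in some `R q` has no proper prefix lying in any `R p`.
(Q): if a word in `L q ∪ R q` has a proper prefix in `L j`, then the
corresponding suffix is a concatenation of `R`-blocks. -/
lemma PQ (hp : PartitionSystem n L R) : ∀ m : ℕ, ∀ h : List α, h.length = m →
    (∀ q, 1 ≤ q → q ≤ n - 1 → h ∈ L q ∪ R q →
      ∀ p z u, 1 ≤ p → p ≤ n - 1 → z ∈ R p → u ≠ [] → h = z ++ u → False) ∧
    (∀ q, 1 ≤ q → q ≤ n - 1 → h ∈ L q ∪ R q →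
      ∀ j x u, 1 ≤ j → j ≤ n - 1 → x ∈ L j → u ≠ [] → x ++ u = h → RProd R n u) := by
  intro m
  induction m using Nat.strong_induction_on with
  | _ m ih =>
    intro h hm
    constructor
    · -- (P)
      intro q hq1 hq hh p z u hp1 hpn hz hu hzu
      have hhl : h.length = q := plen hp q hq1 hq h hh
      have hzl : z.length = p := plen hp p hp1 hpn z (Or.inr hz)
      have hul : u.length ≠ 0 := fun h0 => hu (List.length_eq_zero_iff.mp h0)
      have hlen := congrArg List.length hzu
      rw [List.length_append] at hlen
      have hpq : p < q := by omega
      obtain ⟨k, hk1, hkq, x, hx, y, hy, hxy⟩ := psplit hp (by omega) hq hh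
      have hxl : x.length = k := plen hp k hk1 (by omega) x (Or.inl hx)
      have hyl : y.length = q - k := plen hp (q - k) (by omega) (by omega) y (Or.inr hy)
      have hkey : z ++ u = x ++ y := by rw [← hzu, hxy]
      rcases lt_trichotomy p k with hlt | heq | hgt
      · -- z is a proper prefix of x : apply (P) to x
        obtain ⟨e, he, hxe, -⟩ := append_eq_of_lt hkey (by omega)
        exact (ih x.length (by omega) x rfl).1 k hk1 (by omega) (Or.inl hx)
          p z e hp1 hpn hz he hxe
      · -- z = x : contradiction with L ∩ R = ∅
        have hzx : z = x := (List.append_inj hkey (by omega)).1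
        exact pdisj hp hk1 (by omega) hx (heq ▸ hzx ▸ hz)
      · -- x is a proper prefix of z : apply (Q) to z, then (P) to y
        obtain ⟨e, he, hze, hye⟩ := append_eq_of_lt hkey.symm (by omega)
        have hQ := (ih z.length (by omega) z rfl).2 p hp1 hpn (Or.inr hz)
          k x e hk1 (by omega) hx he hze.symm
        obtain ⟨p₁, w₁, rest, hp₁1, hp₁n, hw₁, hrest⟩ := hQ.head
        have hy' : y = w₁ ++ (rest ++ u) := by
          rw [hye, hrest, List.append_assoc]
        have hne : rest ++ u ≠ [] := by
          intro h0
          exact hu (List.append_eq_nil_iff.mp h0).2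
        exact (ih y.length (by omega) y rfl).1 (q - k) (by omega) (by omega) (Or.inr hy)
          p₁ w₁ (rest ++ u) hp₁1 hp₁n hw₁ hne hy'
    · -- (Q)
      intro q hq1 hq hh j x u hj1 hjn hx hu hxu
      have hhl : h.length = q := plen hp q hq1 hq h hh
      have hxl : x.length = j := plen hp j hj1 hjn x (Or.inl hx)
      have hul : u.length ≠ 0 := fun h0 => hu (List.length_eq_zero_iff.mp h0)
      have hlen := congrArg List.length hxu
      rw [List.length_append] at hlen
      have hjq : j < q := by omega
      obtain ⟨k, hk1, hkq, x₀, hx₀, y₀, hy₀, hxy⟩ := psplit hp (by omega) hq hh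
      have hx₀l : x₀.length = k := plen hp k hk1 (by omega) x₀ (Or.inl hx₀)
      have hy₀l : y₀.length = q - k := plen hp (q - k) (by omega) (by omega) y₀ (Or.inr hy₀)
      have hkey : x ++ u = x₀ ++ y₀ := by rw [hxu, hxy]
      rcases lt_trichotomy j k with hlt | heq | hgt
      · -- x is a proper prefix of x₀ : apply (Q) to x₀, then append the block y₀
        obtain ⟨e, he, hx₀e, hue⟩ := append_eq_of_lt hkey (by omega)
        have hQ := (ih x₀.length (by omega) x₀ rfl).2 k hk1 (by omega) (Or.inl hx₀)
          j x e hj1 hjn hx he hx₀e.symm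
        rw [hue]
        exact hQ.append_right (.single (by omega) (by omega) hy₀)
      · -- x = x₀ : then u = y₀ is a single block
        have hxx : x = x₀ := (List.append_inj hkey (by omega)).1
        have hkey' : x ++ u = x ++ y₀ := by rw [hkey, hxx]
        rw [List.append_cancel_left hkey']
        exact .single (by omega) (by omega) hy₀
      · -- x₀ is a proper prefix of x : apply (Q) to x, then (P) to y₀ for a contradiction
        obtain ⟨e, he, hxe, hy₀e⟩ := append_eq_of_lt hkey.symm (by omega)
        have hQ := (ih x.length (by omega) x rfl).2 j hj1 hjn (Or.inl hx)
          k x₀ e hk1 (by omega) hx₀ he hxe.symm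
        obtain ⟨p₁, w₁, rest, hp₁1, hp₁n, hw₁, hrest⟩ := hQ.head
        have hy' : y₀ = w₁ ++ (rest ++ u) := by
          rw [hy₀e, hrest, List.append_assoc]
        have hne : rest ++ u ≠ [] := by
          intro h0
          exact hu (List.append_eq_nil_iff.mp h0).2
        exact absurd hy' fun hy'' =>
          (ih y₀.length (by omega) y₀ rfl).1 (q - k) (by omega) (by omega) (Or.inr hy₀)
            p₁ w₁ (rest ++ u) hp₁1 hp₁n hw₁ hne hy''

/-- Main disjointness: if `i < j`, a word cannot lie in both `(L i)(R (n-i))` and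
`(L j)(R (n-j))`. -/
lemma disj_main (hp : PartitionSystem n L R) (hn : 3 ≤ n) {i j : ℕ}
    (hi1 : 1 ≤ i) (hij : i < j) (hj : j ≤ n - 1) {w : List α}
    (h1 : w ∈ catSet (L i) (R (n - i))) (h2 : w ∈ catSet (L j) (R (n - j))) : False := by
  obtain ⟨a, ha, b, hb, rfl⟩ := h1
  obtain ⟨c, hc, d, hd, hcd⟩ := h2
  have hal : a.length = i := plen hp i hi1 (by omega) a (Or.inl ha)
  have hcl : c.length = j := plen hp j (by omega) hj c (Or.inl hc)
  have hbl : b.length = n - i := plen hp (n - i) (by omega) (by omega) b (Or.inr hb)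
  have hdl : d.length = n - j := plen hp (n - j) (by omega) (by omega) d (Or.inr hd)
  obtain ⟨e, he, hce, hbe⟩ := append_eq_of_lt hcd (by omega)
  have hQ := (PQ hp c.length c rfl).2 j (by omega) hj (Or.inl hc)
    i a e hi1 (by omega) ha he hce.symm
  obtain ⟨p₁, w₁, rest, hp₁1, hp₁n, hw₁, hrest⟩ := hQ.head
  have hb' : b = w₁ ++ (rest ++ d) := by rw [hbe, hrest, List.append_assoc]
  have hd0 : d ≠ [] := by
    intro h0
    rw [h0] at hdl
    simp at hdl
    omega
  have hne : rest ++ d ≠ [] := by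
    intro h0
    exact hd0 (List.append_eq_nil_iff.mp h0).2
  exact (PQ hp b.length b rfl).1 (n - i) (by omega) (by omega) (Or.inr hb)
    p₁ w₁ (rest ++ d) hp₁1 hp₁n hw₁ hne hb'

lemma ncard_catSet {A B : Set (List α)} {i : ℕ} (hA : ∀ a ∈ A, a.length = i)
    (hAf : A.Finite) (hBf : B.Finite) : (catSet A B).ncard = A.ncard * B.ncard := by
  have himg : catSet A B = (fun p : List α × List α => p.1 ++ p.2) '' (A ×ˢ B) := by
    ext w
    simp only [catSet, Set.mem_setOf_eq, Set.mem_image, Set.mem_prod, Prod.exists]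
    constructor
    · rintro ⟨a, ha, b, hb, rfl⟩; exact ⟨a, b, ⟨ha, hb⟩, rfl⟩
    · rintro ⟨a, b, ⟨ha, hb⟩, rfl⟩; exact ⟨a, ha, b, hb, rfl⟩
  have hinj : Set.InjOn (fun p : List α × List α => p.1 ++ p.2) (A ×ˢ B) := by
    rintro ⟨a, b⟩ hab ⟨a', b'⟩ hab' heq
    have h1 : a.length = a'.length := by
      rw [hA a hab.1, hA a' hab'.1]
    obtain ⟨h2, h3⟩ := List.append_inj heq h1
    simp only [Prod.mk.injEq]
    exact ⟨h2, h3⟩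
  rw [himg, Set.ncard_image_of_injOn hinj]
  calc (A ×ˢ B).ncard = Nat.card ↥(A ×ˢ B) := (Nat.card_coe_set_eq _).symm
    _ = Nat.card (↥A × ↥B) := Nat.card_congr (Equiv.Set.prod A B)
    _ = Nat.card ↥A * Nat.card ↥B := Nat.card_prod _ _
    _ = A.ncard * B.ncard := by rw [Nat.card_coe_set_eq, Nat.card_coe_set_eq]

lemma ncard_biUnion {ι : Type*} {β : Type*} (s : Finset ι) (f : ι → Set β)
    (hf : ∀ i ∈ s, (f i).Finite)
    (hd : ∀ i ∈ s, ∀ j ∈ s, i ≠ j → Disjoint (f i) (f j)) :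
    (⋃ i ∈ s, f i).ncard = ∑ i ∈ s, (f i).ncard := by
  classical
  induction s using Finset.cons_induction with
  | empty => simp
  | cons a s ha ih =>
    have hU : (⋃ i ∈ Finset.cons a s ha, f i) = f a ∪ ⋃ i ∈ s, f i := by
      ext w
      simp only [Finset.mem_cons, Set.mem_iUnion, Set.mem_union, exists_prop]
      constructor
      · rintro ⟨i, hi | hi, hw⟩
        · exact Or.inl (hi ▸ hw)
        · exact Or.inr ⟨i, hi, hw⟩
      · rintro (hw | ⟨i, hi, hw⟩)
        · exact ⟨a, Or.inl rfl, hw⟩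
        · exact ⟨i, Or.inr hi, hw⟩
    have hdisj : Disjoint (f a) (⋃ i ∈ s, f i) := by
      rw [Set.disjoint_left]
      intro w hw hw'
      rw [Set.mem_iUnion₂] at hw'
      obtain ⟨i, hi, hwi⟩ := hw'
      have hne : a ≠ i := fun h => ha (h ▸ hi)
      exact (Set.disjoint_left.mp (hd a (Finset.mem_cons_self a s) i
        (Finset.mem_cons_of_mem hi) hne)) hw hwi
    have hfin : (⋃ i ∈ s, f i).Finite :=
      Set.Finite.biUnion s.finite_toSet fun i hi => hf i (Finset.mem_cons_of_mem hi)
    rw [hU, Set.ncard_union_eq hdisj (hf a (Finset.mem_cons_self a s)) hfin,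
      Finset.sum_cons,
      ih (fun i hi => hf i (Finset.mem_cons_of_mem hi))
        (fun i hi j hj hij => hd i (Finset.mem_cons_of_mem hi) j
          (Finset.mem_cons_of_mem hj) hij)]

end Stmt11Aux

/-- The sets `(L i)(R (n-i))` are pairwise disjoint; consequently the size of their
union is `∑ |L i|·|R (n-i)|`. -/
theorem stmt11 {α : Type*} [Fintype α] (n : ℕ) (hn : 3 ≤ n) (L R : ℕ → Set (List α))
    (hpart : PartitionSystem n L R) :
    (∀ i ∈ Finset.Ico 1 n, ∀ j ∈ Finset.Ico 1 n, i ≠ j →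
      Disjoint (catSet (L i) (R (n - i))) (catSet (L j) (R (n - j)))) ∧
    (⋃ i ∈ Finset.Ico 1 n, catSet (L i) (R (n - i))).ncard =
      ∑ i ∈ Finset.Ico 1 n, (L i).ncard * (R (n - i)).ncard := by
  have hdisj : ∀ i ∈ Finset.Ico 1 n, ∀ j ∈ Finset.Ico 1 n, i ≠ j →
      Disjoint (catSet (L i) (R (n - i))) (catSet (L j) (R (n - j))) := by
    intro i hi j hj hne
    rw [Finset.mem_Ico] at hi hj
    rw [Set.disjoint_left]
    intro w hwi hwj
    rcases lt_or_gt_of_ne hne with h | h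
    · exact Stmt11Aux.disj_main hpart hn hi.1 h (by omega) hwi hwj
    · exact Stmt11Aux.disj_main hpart hn hj.1 h (by omega) hwj hwi
  refine ⟨hdisj, ?_⟩
  have hLfin : ∀ i, 1 ≤ i → i ≤ n - 1 → (L i).Finite := fun i h1 h2 =>
    Set.Finite.subset (List.finite_length_eq α i)
      (fun a ha => Stmt11Aux.plen hpart i h1 h2 a (Or.inl ha))
  have hRfin : ∀ i, 1 ≤ i → i ≤ n - 1 → (R i).Finite := fun i h1 h2 =>
    Set.Finite.subset (List.finite_length_eq α i)
      (fun a ha => Stmt11Aux.plen hpart i h1 h2 a (Or.inr ha))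
  have hcard : ∀ i ∈ Finset.Ico 1 n,
      (catSet (L i) (R (n - i))).ncard = (L i).ncard * (R (n - i)).ncard := by
    intro i hi
    rw [Finset.mem_Ico] at hi
    exact Stmt11Aux.ncard_catSet
      (fun a ha => Stmt11Aux.plen hpart i hi.1 (by omega) a (Or.inl ha))
      (hLfin i hi.1 (by omega)) (hRfin (n - i) (by omega) (by omega))
  have hcatfin : ∀ i ∈ Finset.Ico 1 n, (catSet (L i) (R (n - i))).Finite := by
    intro i hi
    rw [Finset.mem_Ico] at hi
    apply Set.Finite.subset (List.finite_length_eq α n)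
    rintro w ⟨a, ha, b, hb, rfl⟩
    have hal := Stmt11Aux.plen hpart i hi.1 (by omega) a (Or.inl ha)
    have hbl := Stmt11Aux.plen hpart (n - i) (by omega) (by omega) b (Or.inr hb)
    simp only [Set.mem_setOf_eq, List.length_append]
    omega
  rw [Stmt11Aux.ncard_biUnion _ _ hcatfin hdisj]
  exact Finset.sum_congr rfl hcard
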